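/- For ω > 1 and k > 0, the candidate segments satisfy μ¹_2 < 1/ω < μ²_2, i.e., (e^{1/k}−1)/(e^{ω/k}−1) < 1/ω and (e^{ω/k}−e^{(ω−1)/k})/(e^{ω/k}−1) > 1/ω. -/

import Mathlib

theorem stmt_14 (ω k : ℝ) (hω : 1 < ω) (hk : 0 < k) :
    (Real.exp (1 / k) - 1) / (Real.exp (ω / k) - 1) < 1 / ω ∧
    (Real.exp (ω / k) - Real.exp ((ω - 1) / k)) / (Real.exp (ω / k) - 1) > 1 / ω := by
  have hω0 : 0 < ω := lt_trans one_pos hω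
  have hωne : ω ≠ 0 := ne_of_gt hω0
  have hne : (0 : ℝ) ≠ ω / k := by positivity
  have hden : 0 < Real.exp (ω / k) - 1 := by
    have : (1 : ℝ) < Real.exp (ω / k) := by
      rw [show (1:ℝ) = Real.exp 0 by simp]
      exact Real.exp_lt_exp.mpr (by positivity)
    linarith
  have hlt : 1 / ω < 1 := by rw [div_lt_one hω0]; exact hω
  have key : ∀ a b : ℝ, 0 < a → 0 < b → a + b = 1 →
      Real.exp (a * 0 + b * (ω / k)) < a * Real.exp 0 + b * Real.exp (ω / k) := by
    intro a b ha hb hab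
    exact strictConvexOn_exp.2 (Set.mem_univ _) (Set.mem_univ _) hne ha hb hab
  have h1 := key (1 - 1 / ω) (1 / ω) (by linarith) (by positivity) (by ring)
  have h2 := key (1 / ω) (1 - 1 / ω) (by positivity) (by linarith) (by ring)
  rw [show (1 - 1 / ω) * 0 + 1 / ω * (ω / k) = 1 / k by field_simp; ring] at h1
  rw [show 1 / ω * 0 + (1 - 1 / ω) * (ω / k) = (ω - 1) / k by field_simp; ring] at h2
  simp only [Real.exp_zero, mul_one] at h1 h2
  have h1' : ω * Real.exp (1 / k) < ω - 1 + Real.exp (ω / k) := by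
    calc ω * Real.exp (1 / k) < ω * ((1 - 1 / ω) + 1 / ω * Real.exp (ω / k)) :=
          mul_lt_mul_of_pos_left h1 hω0
      _ = ω - 1 + Real.exp (ω / k) := by field_simp
  have h2' : ω * Real.exp ((ω - 1) / k) < 1 + (ω - 1) * Real.exp (ω / k) := by
    calc ω * Real.exp ((ω - 1) / k) < ω * (1 / ω + (1 - 1 / ω) * Real.exp (ω / k)) :=
          mul_lt_mul_of_pos_left h2 hω0
      _ = 1 + (ω - 1) * Real.exp (ω / k) := by field_simp
  constructor
  · rw [div_lt_div_iff₀ hden hω0]; nlinarith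
  · rw [gt_iff_lt, div_lt_div_iff₀ hω0 hden]; nlinarith
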